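/- Let n ≥ 1, p ≥ 1, let f : (Fin n → Fin 2) → ℝ, and let G be a group of permutations of Fin n each of which is a symmetry of f. Let 𝒮 be a finite family of subsets of Fin n (the index sets of the Hamiltonian terms) with real weights w : 𝒮 → ℝ such that the weights are constant on G-orbits (w(S) = w(a(S)) whenever a ∈ G and a(S) ∈ 𝒮), and suppose 𝒮 is closed under the action of G. Then for all parameters β, γ : Fin p → ℝ, the QAOA energy ∑_{S ∈ 𝒮} w(S) ⟨β,γ| Z_S |β,γ⟩ equals ∑over G-orbits O of 𝒮 of |O| · w(s_O) · ⟨β,γ| Z_{s_O} |β,γ⟩, where s_O is any chosen representative of the orbit O. -/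

import Mathlib

open scoped Classical
open Matrix

namespace QAOA

/-- Bitstrings on `n` bits: the computational basis index set. -/
abbrev Bit (n : ℕ) := Fin n → Fin 2

/-- Pauli-Z on qubit `j`: diagonal with entries `(-1)^(x j)`. -/
noncomputable def Zop (n : ℕ) (j : Fin n) : Matrix (Bit n) (Bit n) ℂ :=
  Matrix.diagonal fun x => (-1 : ℂ) ^ (x j : ℕ)

/-- Flip bit `j` of bitstring `x`. -/
def flip {n : ℕ} (x : Bit n) (j : Fin n) : Bit n := Function.update x j (1 - x j)

/-- Pauli-X on qubit `j`. -/
noncomputable def Xop (n : ℕ) (j : Fin n) : Matrix (Bit n) (Bit n) ℂ :=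
  Matrix.of fun x y => if y = flip x j then 1 else 0

/-- The Z-product observable `Z_S = ∏_{j ∈ S} Z_j`. -/
noncomputable def Zprod (n : ℕ) (S : Finset (Fin n)) : Matrix (Bit n) (Bit n) ℂ :=
  (S.toList.map (Zop n)).prod

/-- The mixing Hamiltonian `B = ∑ j, X_j`. -/
noncomputable def mixB (n : ℕ) : Matrix (Bit n) (Bit n) ℂ := ∑ j, Xop n j

/-- The cost Hamiltonian `H(f)`, diagonal with entries `f x`. -/
noncomputable def costH (n : ℕ) (f : Bit n → ℝ) : Matrix (Bit n) (Bit n) ℂ :=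
  Matrix.diagonal fun x => (f x : ℂ)

/-- The uniform superposition `|s⟩`, all entries `2^(-n/2)`. -/
noncomputable def uniform (n : ℕ) : Bit n → ℂ := fun _ => (((2 : ℝ) ^ (-(n : ℝ) / 2) : ℝ) : ℂ)

/-- The depth-`p` QAOA state
`|β,γ⟩ = exp(-i β_p B) exp(-i γ_p H(f)) ⋯ exp(-i β_1 B) exp(-i γ_1 H(f)) |s⟩`. -/
noncomputable def qaoaState (n p : ℕ) (f : Bit n → ℝ) (β γ : Fin p → ℝ) : Bit n → ℂ :=
  ((List.finRange p).map fun k =>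
      NormedSpace.exp ((-Complex.I * (β k : ℂ)) • mixB n) *
      NormedSpace.exp ((-Complex.I * (γ k : ℂ)) • costH n f)).reverse.prod *ᵥ uniform n

/-- The expectation `⟨ψ|M|ψ⟩ = ∑ x, conj (ψ x) * (M ψ) x`. -/
noncomputable def expectation {n : ℕ} (M : Matrix (Bit n) (Bit n) ℂ) (ψ : Bit n → ℂ) : ℂ :=
  ∑ x, star (ψ x) * (M *ᵥ ψ) x

/-- The action of a permutation of qubit indices on bitstrings: `(a·x) j = x (a⁻¹ j)`. -/
def permAct {n : ℕ} (a : Equiv.Perm (Fin n)) (x : Bit n) : Bit n := fun j => x (a⁻¹ j)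

/-- The permutation unitary induced by `a`: `A x y = 1` iff `x = a·y`. -/
noncomputable def permMat {n : ℕ} (a : Equiv.Perm (Fin n)) : Matrix (Bit n) (Bit n) ℂ :=
  Matrix.of fun x y => if x = permAct a y then 1 else 0


variable {n : ℕ}

lemma permAct_permAct (a b : Equiv.Perm (Fin n)) (x : Bit n) :
    permAct a (permAct b x) = permAct (a * b) x := by
  funext j; simp [permAct, _root_.mul_inv_rev]

lemma permAct_inv_cancel (a : Equiv.Perm (Fin n)) (x : Bit n) :
    permAct a (permAct a⁻¹ x) = x := by
  rw [permAct_permAct, mul_inv_cancel]; rfl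

lemma permAct_cancel_inv (a : Equiv.Perm (Fin n)) (x : Bit n) :
    permAct a⁻¹ (permAct a x) = x := by
  rw [permAct_permAct, inv_mul_cancel]; rfl

lemma permAct_bijective (a : Equiv.Perm (Fin n)) : Function.Bijective (permAct (n := n) a) :=
  Function.bijective_iff_has_inverse.2
    ⟨permAct a⁻¹, fun x => permAct_cancel_inv a x, fun x => permAct_inv_cancel a x⟩

lemma permMat_mulVec (a : Equiv.Perm (Fin n)) (v : Bit n → ℂ) (x : Bit n) :
    (permMat a *ᵥ v) x = v (permAct a⁻¹ x) := by
  simp only [permMat, Matrix.mulVec, dotProduct, Matrix.of_apply]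
  rw [Finset.sum_eq_single (permAct a⁻¹ x)]
  · simp [permAct_inv_cancel]
  · intro y _ hy
    rw [if_neg, zero_mul]
    intro h
    exact hy (by rw [h, permAct_cancel_inv])
  · simp

lemma permMat_mul_permMat (a b : Equiv.Perm (Fin n)) :
    permMat a * permMat b = permMat (a * b) := by
  ext x y
  simp only [permMat, Matrix.mul_apply, Matrix.of_apply]
  rw [Finset.sum_eq_single (permAct b y)]
  · simp [permAct_permAct]
  · intro z _ hz; rw [if_neg hz, mul_zero]
  · simp

lemma permAct_one (x : Bit n) : permAct (1 : Equiv.Perm (Fin n)) x = x := rfl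

lemma permMat_one : permMat (1 : Equiv.Perm (Fin n)) = 1 := by
  ext x y
  simp [permMat, Matrix.one_apply, permAct_one, eq_comm]
  split_ifs <;> simp_all

noncomputable def permUnit (a : Equiv.Perm (Fin n)) : (Matrix (Bit n) (Bit n) ℂ)ˣ where
  val := permMat a
  inv := permMat a⁻¹
  val_inv := by rw [permMat_mul_permMat, mul_inv_cancel, permMat_one]
  inv_val := by rw [permMat_mul_permMat, inv_mul_cancel, permMat_one]

lemma isUnit_permMat (a : Equiv.Perm (Fin n)) : IsUnit (permMat a) := ⟨permUnit a, rfl⟩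

lemma permMat_commute_costH (a : Equiv.Perm (Fin n)) (f : Bit n → ℝ)
    (hf : ∀ x, f (permAct a x) = f x) :
    Commute (permMat a) (costH n f) := by
  ext x y
  simp only [Matrix.mul_apply, costH, permMat, Matrix.of_apply, Matrix.diagonal_apply]
  rw [Finset.sum_eq_single y (fun z _ hz => by rw [if_neg hz, mul_zero]) (by simp),
      Finset.sum_eq_single x (fun z _ hz => by rw [if_neg (fun h => hz h.symm), zero_mul])
        (by simp)]
  by_cases h : x = permAct a y
  · subst h; rw [hf y]; simp
  · simp [if_neg h]

lemma permAct_inv_flip (a : Equiv.Perm (Fin n)) (x : Bit n) (j : Fin n) :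
    permAct a⁻¹ (flip x (a j)) = flip (permAct a⁻¹ x) j := by
  funext k
  simp only [permAct, flip, Function.update_apply, inv_inv]
  rw [if_congr a.injective.eq_iff rfl rfl]

lemma permMat_commute_Xop (a : Equiv.Perm (Fin n)) (j : Fin n) :
    permMat a * Xop n j = Xop n (a j) * permMat a := by
  ext x y
  simp only [Matrix.mul_apply, Xop, permMat, Matrix.of_apply]
  rw [Finset.sum_eq_single (permAct a⁻¹ x)
        (fun z _ hz => by
          rw [if_neg, zero_mul]; intro h; exact hz (by rw [h, permAct_cancel_inv]))
        (by simp),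
      Finset.sum_eq_single (flip x (a j)) (fun z _ hz => by rw [if_neg hz, zero_mul]) (by simp)]
  simp only [if_pos rfl, permAct_inv_cancel, one_mul, mul_one]
  have hiff : (y = flip (permAct a⁻¹ x) j) ↔ (flip x (a j) = permAct a y) := by
    constructor
    · intro h; rw [h, ← permAct_inv_flip a x j, permAct_inv_cancel]
    · intro h
      have h2 := congrArg (permAct a⁻¹) h
      rw [permAct_inv_flip, permAct_cancel_inv] at h2
      exact h2.symm
  rw [if_congr hiff rfl rfl]

lemma permMat_commute_mixB (a : Equiv.Perm (Fin n)) :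
    Commute (permMat a) (mixB n) := by
  unfold Commute SemiconjBy
  rw [mixB, Finset.mul_sum, Finset.sum_mul]
  rw [← Equiv.sum_comp a (fun j => Xop n j * permMat a)]
  exact Finset.sum_congr rfl fun j _ => permMat_commute_Xop a j

lemma permMat_commute_exp (a : Equiv.Perm (Fin n)) (M : Matrix (Bit n) (Bit n) ℂ)
    (h : Commute (permMat a) M) :
    Commute (permMat a) (NormedSpace.exp M) := by
  have hU : (permUnit a : Matrix (Bit n) (Bit n) ℂ) = permMat a := rfl
  have hUinv : (((permUnit a)⁻¹ : (Matrix (Bit n) (Bit n) ℂ)ˣ) : Matrix (Bit n) (Bit n) ℂ)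
      = permMat a⁻¹ := rfl
  have hconj : (permUnit a : Matrix (Bit n) (Bit n) ℂ) * M *
      (((permUnit a)⁻¹ : (Matrix (Bit n) (Bit n) ℂ)ˣ) : Matrix (Bit n) (Bit n) ℂ) = M := by
    rw [hU, hUinv, h.eq, mul_assoc, permMat_mul_permMat, mul_inv_cancel, permMat_one, mul_one]
  have key := Matrix.exp_units_conj (permUnit a) M
  rw [hconj] at key
  have h3 := congrArg (· * (permUnit a : Matrix (Bit n) (Bit n) ℂ)) key
  simp only [mul_assoc, Units.inv_mul, mul_one] at h3
  unfold Commute SemiconjBy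
  rw [← hU]
  exact h3.symm

lemma permMat_commute_qaoaProd (p : ℕ) (a : Equiv.Perm (Fin n)) (f : Bit n → ℝ)
    (hf : ∀ x, f (permAct a x) = f x) (β γ : Fin p → ℝ) :
    Commute (permMat a)
      (((List.finRange p).map fun k =>
        NormedSpace.exp ((-Complex.I * (β k : ℂ)) • mixB n) *
        NormedSpace.exp ((-Complex.I * (γ k : ℂ)) • costH n f)).reverse.prod) := by
  apply Commute.list_prod_right
  intro M hM
  rw [List.mem_reverse, List.mem_map] at hM
  obtain ⟨k, _, rfl⟩ := hM
  exact Commute.mul_right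
    (permMat_commute_exp a _ ((permMat_commute_mixB a).smul_right _))
    (permMat_commute_exp a _ ((permMat_commute_costH a f hf).smul_right _))

lemma permMat_mulVec_uniform (a : Equiv.Perm (Fin n)) :
    permMat a *ᵥ uniform n = uniform n := by
  funext x
  rw [permMat_mulVec]
  rfl

lemma qaoaState_invariant (p : ℕ) (a : Equiv.Perm (Fin n)) (f : Bit n → ℝ)
    (hf : ∀ x, f (permAct a x) = f x) (β γ : Fin p → ℝ) (x : Bit n) :
    qaoaState n p f β γ (permAct a⁻¹ x) = qaoaState n p f β γ x := by
  have h := permMat_commute_qaoaProd p a f hf β γ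
  have : permMat a *ᵥ qaoaState n p f β γ = qaoaState n p f β γ := by
    rw [qaoaState, Matrix.mulVec_mulVec, h.eq, ← Matrix.mulVec_mulVec,
      permMat_mulVec_uniform]
  calc qaoaState n p f β γ (permAct a⁻¹ x)
      = (permMat a *ᵥ qaoaState n p f β γ) x := (permMat_mulVec a _ x).symm
    _ = qaoaState n p f β γ x := by rw [this]

lemma Zprod_list (l : List (Fin n)) :
    (l.map (Zop n)).prod =
      Matrix.diagonal fun x => (l.map fun j => (-1 : ℂ) ^ (x j : ℕ)).prod := by
  induction l with
  | nil => simp [Matrix.diagonal_one]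
  | cons j l ih =>
    simp only [List.map_cons, List.prod_cons, ih, Zop, Matrix.diagonal_mul_diagonal]

lemma Zprod_eq_diagonal (S : Finset (Fin n)) :
    Zprod n S = Matrix.diagonal fun x => ∏ j ∈ S, (-1 : ℂ) ^ (x j : ℕ) := by
  rw [Zprod, Zprod_list]
  have h : (fun (x : Bit n) => (List.map (fun j => (-1 : ℂ) ^ (x j : ℕ)) S.toList).prod)
      = fun x => ∏ j ∈ S, (-1 : ℂ) ^ (x j : ℕ) :=
    funext fun x => Finset.prod_map_toList S _
  rw [h]

lemma expectation_Zprod_image (p : ℕ) (a : Equiv.Perm (Fin n)) (f : Bit n → ℝ)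
    (hf : ∀ x, f (permAct a x) = f x) (hf' : ∀ x, f (permAct a⁻¹ x) = f x)
    (β γ : Fin p → ℝ) (S : Finset (Fin n)) :
    expectation (Zprod n (S.image a)) (qaoaState n p f β γ) =
      expectation (Zprod n S) (qaoaState n p f β γ) := by
  set ψ := qaoaState n p f β γ with hψ
  have hinv : ∀ x, ψ (permAct a x) = ψ x := by
    intro x
    have := qaoaState_invariant p a⁻¹ f hf' β γ x
    rwa [inv_inv] at this
  simp only [expectation, Zprod_eq_diagonal, Matrix.mulVec_diagonal]
  rw [← (permAct_bijective a).sum_comp (g := fun x => star (ψ x) * (( ∏ j ∈ S.image a, (-1:ℂ) ^ (x j : ℕ)) * ψ x))]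
  apply Finset.sum_congr rfl
  intro x _
  rw [hinv x, Finset.prod_image (fun i _ j _ h => a.injective h)]
  congr 2
  apply Finset.prod_congr rfl
  intro j _
  have : permAct a x (a j) = x j := by
    simp [permAct]
  rw [this]

/-- For a group `G` of symmetries of `f`, a `G`-closed family `𝒮` of
index sets with `G`-invariant weights, and a set `R` of orbit representatives,
the QAOA energy `∑_{S ∈ 𝒮} w S ⟨Z_S⟩` equals `∑_{r ∈ R} |orbit of r| * w r * ⟨Z_r⟩`. -/
theorem qaoa_energy_orbit_sum (n p : ℕ) (hn : 1 ≤ n) (hp : 1 ≤ p)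
    (f : Bit n → ℝ) (G : Subgroup (Equiv.Perm (Fin n)))
    (hsym : ∀ a ∈ G, ∀ x : Bit n, f (permAct a x) = f x)
    (𝒮 : Finset (Finset (Fin n))) (w : Finset (Fin n) → ℝ)
    (hclosed : ∀ a ∈ G, ∀ S ∈ 𝒮, S.image a ∈ 𝒮)
    (hw : ∀ a ∈ G, ∀ S ∈ 𝒮, w (S.image a) = w S)
    (R : Finset (Finset (Fin n))) (hR : R ⊆ 𝒮)
    (hrep : ∀ S ∈ 𝒮, ∃! r, r ∈ R ∧ ∃ a ∈ G, S.image a = r)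
    (β γ : Fin p → ℝ) :
    ∑ S ∈ 𝒮, (w S : ℂ) * expectation (Zprod n S) (qaoaState n p f β γ) =
      ∑ r ∈ R,
        (((𝒮.filter fun S => ∃ a ∈ G, S.image a = r).card : ℕ) : ℂ) * (w r : ℂ) *
          expectation (Zprod n r) (qaoaState n p f β γ) := by
  classical
  have key : ∀ r ∈ R, ∀ S ∈ 𝒮.filter (fun S => ∃ a ∈ G, S.image a = r),
      (w S : ℂ) * expectation (Zprod n S) (qaoaState n p f β γ)
        = (w r : ℂ) * expectation (Zprod n r) (qaoaState n p f β γ) := by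
    intro r _ S hS
    rw [Finset.mem_filter] at hS
    obtain ⟨hS𝒮, a, haG, haim⟩ := hS
    have h1 : (w r : ℂ) = (w S : ℂ) := by rw [← haim, hw a haG S hS𝒮]
    have h2 : expectation (Zprod n r) (qaoaState n p f β γ)
        = expectation (Zprod n S) (qaoaState n p f β γ) := by
      rw [← haim]
      exact expectation_Zprod_image p a f (hsym a haG) (hsym a⁻¹ (inv_mem haG)) β γ S
    rw [h1, h2]
  have part : ∑ S ∈ 𝒮, (w S : ℂ) * expectation (Zprod n S) (qaoaState n p f β γ)
      = ∑ r ∈ R, ∑ S ∈ 𝒮.filter (fun S => ∃ a ∈ G, S.image a = r),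
          (w S : ℂ) * expectation (Zprod n S) (qaoaState n p f β γ) := by
    simp only [Finset.sum_filter]
    rw [Finset.sum_comm]
    apply Finset.sum_congr rfl
    intro S hS
    obtain ⟨r0, ⟨hr0R, hr0⟩, huniq⟩ := hrep S hS
    rw [Finset.sum_eq_single r0]
    · rw [if_pos hr0]
    · intro r hrR hne
      rw [if_neg]
      intro hc
      exact hne (huniq r ⟨hrR, hc⟩)
    · intro h; exact absurd hr0R h
  rw [part]
  apply Finset.sum_congr rfl
  intro r hrR
  rw [Finset.sum_congr rfl (key r hrR), Finset.sum_const, nsmul_eq_mul, mul_assoc]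

end QAOA
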